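/- If Q is the disjoint union of two quivers Q₁ and Q₂, neither of which admits a reddening sequence, then uRed(Q) ≤ |V(Q)| - 2 (and hence Red(Q) ≤ |V(Q)| - 2). -/

import Mathlib

/-- Matrix mutation of the exchange matrix `B` at vertex `k`. -/
def mutB {V : Type*} [DecidableEq V] (k : V) (B : V → V → ℤ) : V → V → ℤ :=
  fun i j => if i = k ∨ j = k then -B i j
    else B i j + max (B i k) 0 * max (B k j) 0 - max (-B i k) 0 * max (-B k j) 0

/-- Mutation of the frozen block `C` (rows: mutable vertices, columns: frozen vertices). -/
def mutC {V : Type*} [DecidableEq V] (k : V) (B C : V → V → ℤ) : V → V → ℤ :=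
  fun i j => if i = k then -C i j
    else C i j + max (B i k) 0 * max (C k j) 0 - max (-B i k) 0 * max (-C k j) 0

/-- Mutation of an extended (framed) matrix: principal part and frozen block. -/
def mutE {V : Type*} [DecidableEq V] (k : V) (p : (V → V → ℤ) × (V → V → ℤ)) :
    (V → V → ℤ) × (V → V → ℤ) :=
  (mutB k p.1, mutC k p.1 p.2)

/-- Apply a sequence of mutations to an extended matrix. -/
def applyE {V : Type*} [DecidableEq V] (l : List V) (p : (V → V → ℤ) × (V → V → ℤ)) :
    (V → V → ℤ) × (V → V → ℤ) :=
  l.foldl (fun q k => mutE k q) p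

/-- The framed quiver of `B`: frozen block is the identity. -/
def framed {V : Type*} [DecidableEq V] (B : V → V → ℤ) : (V → V → ℤ) × (V → V → ℤ) :=
  (B, fun i j => if i = j then 1 else 0)

/-- A mutable vertex is green if its frozen row has a positive entry. -/
def IsGreen {V : Type*} (p : (V → V → ℤ) × (V → V → ℤ)) (i : V) : Prop :=
  ∃ j, 0 < p.2 i j

/-- A mutable vertex is red if its frozen row has a negative entry. -/
def IsRed {V : Type*} (p : (V → V → ℤ) × (V → V → ℤ)) (i : V) : Prop :=
  ∃ j, p.2 i j < 0

/-- A green sequence: each mutation occurs at a currently green vertex. -/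
def IsGreenSeq {V : Type*} [DecidableEq V] (p : (V → V → ℤ) × (V → V → ℤ)) : List V → Prop
  | [] => True
  | k :: l => IsGreen p k ∧ IsGreenSeq (mutE k p) l

/-- Number of red vertices of an extended matrix. -/
noncomputable def redCount {V : Type*} (p : (V → V → ℤ) × (V → V → ℤ)) : ℕ :=
  Nat.card {i : V // IsRed p i}

/-- The red size `Red(Q)`: max number of red vertices attainable by a green sequence. -/
noncomputable def RedNum {V : Type*} [DecidableEq V] (B : V → V → ℤ) : ℕ :=
  sSup {m : ℕ | ∃ l : List V, IsGreenSeq (framed B) l ∧ redCount (applyE l (framed B)) = m}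

/-- The unrestricted red size `uRed(Q)`. -/
noncomputable def uRedNum {V : Type*} [DecidableEq V] (B : V → V → ℤ) : ℕ :=
  sSup {m : ℕ | ∃ l : List V, redCount (applyE l (framed B)) = m}

/-- `Q` admits a maximal green sequence. -/
def AdmitsMGS {V : Type*} [DecidableEq V] (B : V → V → ℤ) : Prop :=
  ∃ l : List V, IsGreenSeq (framed B) l ∧ ∀ i, IsRed (applyE l (framed B)) i

/-- `Q` admits a reddening sequence. -/
def AdmitsReddening {V : Type*} [DecidableEq V] (B : V → V → ℤ) : Prop :=
  ∃ l : List V, ∀ i, IsRed (applyE l (framed B)) i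

/-- Skew-symmetry. -/
def IsSkew {V : Type*} (B : V → V → ℤ) : Prop := ∀ i j, B i j = - B j i

/-- Connectedness of the underlying graph of a quiver. -/
def QConnected {V : Type*} (B : V → V → ℤ) : Prop :=
  (SimpleGraph.fromRel (fun i j => B i j ≠ 0)).Connected

section Aux

variable {V₁ V₂ : Type*} [DecidableEq V₁] [DecidableEq V₂]

/-- Invariant: the big extended matrix is block diagonal with blocks `p₁`, `p₂`. -/
structure InvBlk (p : ((V₁ ⊕ V₂) → (V₁ ⊕ V₂) → ℤ) × ((V₁ ⊕ V₂) → (V₁ ⊕ V₂) → ℤ))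
    (p₁ : (V₁ → V₁ → ℤ) × (V₁ → V₁ → ℤ)) (p₂ : (V₂ → V₂ → ℤ) × (V₂ → V₂ → ℤ)) : Prop where
  b11 : ∀ i j, p.1 (Sum.inl i) (Sum.inl j) = p₁.1 i j
  b12 : ∀ i j, p.1 (Sum.inl i) (Sum.inr j) = 0
  b21 : ∀ i j, p.1 (Sum.inr i) (Sum.inl j) = 0
  b22 : ∀ i j, p.1 (Sum.inr i) (Sum.inr j) = p₂.1 i j
  c11 : ∀ i j, p.2 (Sum.inl i) (Sum.inl j) = p₁.2 i j
  c12 : ∀ i j, p.2 (Sum.inl i) (Sum.inr j) = 0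
  c21 : ∀ i j, p.2 (Sum.inr i) (Sum.inl j) = 0
  c22 : ∀ i j, p.2 (Sum.inr i) (Sum.inr j) = p₂.2 i j

lemma InvBlk.stepL {p : ((V₁ ⊕ V₂) → (V₁ ⊕ V₂) → ℤ) × ((V₁ ⊕ V₂) → (V₁ ⊕ V₂) → ℤ)}
    {p₁ : (V₁ → V₁ → ℤ) × (V₁ → V₁ → ℤ)} {p₂ : (V₂ → V₂ → ℤ) × (V₂ → V₂ → ℤ)}
    (h : InvBlk p p₁ p₂) (k : V₁) :
    InvBlk (mutE (Sum.inl k) p) (mutE k p₁) p₂ := by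
  constructor
  · intro i j; simp only [mutE, mutB, Sum.inl.injEq, h.b11]
  · intro i j; simp [mutE, mutB, h.b12]
  · intro i j; simp [mutE, mutB, h.b21]
  · intro i j; simp [mutE, mutB, h.b21, h.b22]
  · intro i j; simp only [mutE, mutC, Sum.inl.injEq, h.b11, h.c11]
  · intro i j; simp [mutE, mutC, h.c12]
  · intro i j; simp [mutE, mutC, h.b21, h.c21]
  · intro i j; simp [mutE, mutC, h.b21, h.c22]

lemma InvBlk.stepR {p : ((V₁ ⊕ V₂) → (V₁ ⊕ V₂) → ℤ) × ((V₁ ⊕ V₂) → (V₁ ⊕ V₂) → ℤ)}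
    {p₁ : (V₁ → V₁ → ℤ) × (V₁ → V₁ → ℤ)} {p₂ : (V₂ → V₂ → ℤ) × (V₂ → V₂ → ℤ)}
    (h : InvBlk p p₁ p₂) (k : V₂) :
    InvBlk (mutE (Sum.inr k) p) p₁ (mutE k p₂) := by
  constructor
  · intro i j; simp [mutE, mutB, h.b12, h.b11]
  · intro i j; simp [mutE, mutB, h.b12]
  · intro i j; simp [mutE, mutB, h.b21]
  · intro i j; simp only [mutE, mutB, Sum.inr.injEq, h.b22]
  · intro i j; simp [mutE, mutC, h.b12, h.c11]
  · intro i j; simp [mutE, mutC, h.b12, h.c12]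
  · intro i j; simp [mutE, mutC, h.c21]
  · intro i j; simp only [mutE, mutC, Sum.inr.injEq, h.b22, h.c22]

/-- Restriction of a mutation sequence to the left component. -/
def restrL : List (V₁ ⊕ V₂) → List V₁ :=
  fun l => l.filterMap (Sum.elim some fun _ => none)

/-- Restriction of a mutation sequence to the right component. -/
def restrR : List (V₁ ⊕ V₂) → List V₂ :=
  fun l => l.filterMap (Sum.elim (fun _ => none) some)

lemma applyE_cons {V : Type*} [DecidableEq V] (k : V) (l : List V) (p) :
    applyE (k :: l) p = applyE l (mutE k p) := rfl

lemma InvBlk.apply {p : ((V₁ ⊕ V₂) → (V₁ ⊕ V₂) → ℤ) × ((V₁ ⊕ V₂) → (V₁ ⊕ V₂) → ℤ)}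
    {p₁ : (V₁ → V₁ → ℤ) × (V₁ → V₁ → ℤ)} {p₂ : (V₂ → V₂ → ℤ) × (V₂ → V₂ → ℤ)}
    (h : InvBlk p p₁ p₂) (l : List (V₁ ⊕ V₂)) :
    InvBlk (applyE l p) (applyE (restrL l) p₁) (applyE (restrR l) p₂) := by
  induction l generalizing p p₁ p₂ with
  | nil => exact h
  | cons k l ih =>
    cases k with
    | inl k =>
      have : restrL (Sum.inl k :: l) = k :: restrL l := rfl
      rw [this, applyE_cons, applyE_cons]
      have : restrR (Sum.inl k :: l) = restrR l := rfl
      rw [this]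
      exact ih (h.stepL k)
    | inr k =>
      have : restrR (Sum.inr k :: l) = k :: restrR l := rfl
      rw [this, applyE_cons, applyE_cons]
      have : restrL (Sum.inr k :: l) = restrL l := rfl
      rw [this]
      exact ih (h.stepR k)

end Aux

/-- a disjoint union of two quivers neither of which admits a reddening
sequence has `uRed(Q) ≤ |V(Q)| - 2` (hence also `Red(Q) ≤ |V(Q)| - 2`). -/
theorem uRed_disjoint_union {V₁ V₂ : Type*} [Fintype V₁] [DecidableEq V₁]
    [Fintype V₂] [DecidableEq V₂] (B : (V₁ ⊕ V₂) → (V₁ ⊕ V₂) → ℤ) (hB : IsSkew B)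
    (hdisj₁ : ∀ (i : V₁) (j : V₂), B (Sum.inl i) (Sum.inr j) = 0)
    (hdisj₂ : ∀ (i : V₂) (j : V₁), B (Sum.inr i) (Sum.inl j) = 0)
    (h₁ : ¬ AdmitsReddening (fun i j : V₁ => B (Sum.inl i) (Sum.inl j)))
    (h₂ : ¬ AdmitsReddening (fun i j : V₂ => B (Sum.inr i) (Sum.inr j))) :
    uRedNum B ≤ Fintype.card (V₁ ⊕ V₂) - 2 ∧
    RedNum B ≤ Fintype.card (V₁ ⊕ V₂) - 2 := by
  classical
  set B₁ : V₁ → V₁ → ℤ := fun i j => B (Sum.inl i) (Sum.inl j) with hB₁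
  set B₂ : V₂ → V₂ → ℤ := fun i j => B (Sum.inr i) (Sum.inr j) with hB₂
  -- the framed matrices satisfy the block invariant
  have hinit : InvBlk (framed B) (framed B₁) (framed B₂) := by
    constructor <;> intro i j <;> simp [framed, hdisj₁, hdisj₂, hB₁, hB₂]
  rw [AdmitsReddening] at h₁ h₂
  push_neg at h₁ h₂
  -- the key bound for an arbitrary mutation sequence
  have key : ∀ l : List (V₁ ⊕ V₂),
      redCount (applyE l (framed B)) ≤ Fintype.card (V₁ ⊕ V₂) - 2 := by
    intro l
    obtain ⟨i₁, hi₁⟩ := h₁ (restrL l)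
    obtain ⟨i₂, hi₂⟩ := h₂ (restrR l)
    have hblk := hinit.apply l
    set p := applyE l (framed B)
    have hni₁ : ¬ IsRed p (Sum.inl i₁) := by
      rintro ⟨j, hj⟩
      cases j with
      | inl j => exact hi₁ ⟨j, by rwa [← hblk.c11]⟩
      | inr j => rw [hblk.c12] at hj; exact absurd hj (by norm_num)
    have hni₂ : ¬ IsRed p (Sum.inr i₂) := by
      rintro ⟨j, hj⟩
      cases j with
      | inl j => rw [hblk.c21] at hj; exact absurd hj (by norm_num)
      | inr j => exact hi₂ ⟨j, by rwa [← hblk.c22]⟩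
    -- count: the red set avoids two distinct vertices
    have hsub : {i : V₁ ⊕ V₂ | IsRed p i} ⊆ ({Sum.inl i₁, Sum.inr i₂} : Set (V₁ ⊕ V₂))ᶜ := by
      intro x hx
      simp only [Set.mem_compl_iff, Set.mem_insert_iff, Set.mem_singleton_iff]
      rintro (rfl | rfl)
      · exact hni₁ hx
      · exact hni₂ hx
    have hcount : redCount p = ({i : V₁ ⊕ V₂ | IsRed p i}).ncard := by
      rfl
    rw [hcount]
    calc ({i : V₁ ⊕ V₂ | IsRed p i}).ncard
        ≤ (({Sum.inl i₁, Sum.inr i₂} : Set (V₁ ⊕ V₂))ᶜ).ncard :=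
          Set.ncard_le_ncard hsub (Set.toFinite _)
      _ = Fintype.card (V₁ ⊕ V₂) - 2 := by
          have h2 : ({Sum.inl i₁, Sum.inr i₂} : Set (V₁ ⊕ V₂)).ncard = 2 :=
            Set.ncard_pair (by simp)
          have := Set.ncard_add_ncard_compl ({Sum.inl i₁, Sum.inr i₂} : Set (V₁ ⊕ V₂))
          rw [h2, Nat.card_eq_fintype_card] at this
          omega
  constructor
  · refine csSup_le ⟨redCount (applyE [] (framed B)), [], rfl⟩ ?_
    rintro m ⟨l, rfl⟩
    exact key l
  · refine csSup_le ⟨redCount (applyE [] (framed B)), [], trivial, rfl⟩ ?_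
    rintro m ⟨l, _, rfl⟩
    exact key l
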